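/- Let I ⊆ k[x_1,…,x_n] be an ideal, let ℚ^r carry the lexicographic order, and let M ∈ ℚ^{r×n} have rows u_1,…,u_r ∈ ℚ^n. Then in_M(I) = in_{u_r}( … (in_{u_2}(in_{u_1}(I))) … ), the iterated rank-1 initial ideal taken successively with respect to u_1, then u_2, …, then u_r. -/

import Mathlib

open MvPolynomial

instance finWellFoundedLT {r : ℕ} : WellFoundedLT (Fin r) := Finite.to_wellFoundedLT

/-- The initial form of a polynomial with respect to a comparison `le` on exponent vectors:
the sum of the terms of `f` whose exponent is `le`-minimal in the support of `f`. -/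
noncomputable def initialForm {k : Type} [Field k] {n : ℕ}
    (le : (Fin n →₀ ℕ) → (Fin n →₀ ℕ) → Prop)
    (f : MvPolynomial (Fin n) k) : MvPolynomial (Fin n) k :=
  letI := Classical.decPred fun α : Fin n →₀ ℕ => ∀ β ∈ f.support, le α β
  ∑ α ∈ f.support.filter (fun α => ∀ β ∈ f.support, le α β),
    monomial α (MvPolynomial.coeff α f)

/-- The initial ideal of `I`: the ideal generated by initial forms of nonzero elements of `I`. -/
noncomputable def initialIdeal {k : Type} [Field k] {n : ℕ}
    (le : (Fin n →₀ ℕ) → (Fin n →₀ ℕ) → Prop)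
    (I : Ideal (MvPolynomial (Fin n) k)) : Ideal (MvPolynomial (Fin n) k) :=
  Ideal.span {g | ∃ f ∈ I, f ≠ 0 ∧ g = initialForm le f}

/-- The weight `Mα ∈ ℚ^r` of an exponent vector `α` under the weighting matrix `M`. -/
def mwt {n r : ℕ} (M : Matrix (Fin r) (Fin n) ℚ) (α : Fin n →₀ ℕ) : Fin r → ℚ :=
  fun i => ∑ j, M i j * (α j : ℚ)

/-- Comparison of exponents by `M`-weight, in the lexicographic order on `ℚ^r`. -/
def mLe {n r : ℕ} (M : Matrix (Fin r) (Fin n) ℚ) : (Fin n →₀ ℕ) → (Fin n →₀ ℕ) → Prop :=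
  fun α β => toLex (mwt M α) ≤ toLex (mwt M β)

/-- The weight `u·α ∈ ℚ` of an exponent vector under a single weight vector `u ∈ ℚ^n`. -/
def uwt {n : ℕ} (u : Fin n → ℚ) (α : Fin n →₀ ℕ) : ℚ := ∑ j, u j * (α j : ℚ)

/-- Comparison of exponents by `u`-weight. -/
def uLe {n : ℕ} (u : Fin n → ℚ) : (Fin n →₀ ℕ) → (Fin n →₀ ℕ) → Prop :=
  fun α β => uwt u α ≤ uwt u β

/-- The iterated rank-1 initial ideal `in_{u_r}(…(in_{u_1}(I))…)`, for `us = [u_1, …, u_r]`. -/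
noncomputable def iteratedInitial {k : Type} [Field k] {n : ℕ}
    (us : List (Fin n → ℚ)) (I : Ideal (MvPolynomial (Fin n) k)) :
    Ideal (MvPolynomial (Fin n) k) :=
  us.foldl (fun J u => initialIdeal (uLe u) J) I

theorem finLexLt {r : ℕ} (x y : Fin (r+1) → ℚ) :
    toLex x < toLex y ↔ x 0 < y 0 ∨ (x 0 = y 0 ∧ toLex (x ∘ Fin.succ) < toLex (y ∘ Fin.succ)) := by
  constructor
  · rintro ⟨i, h1, h2⟩
    rcases Fin.eq_zero_or_eq_succ i with rfl | ⟨j, rfl⟩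
    · exact Or.inl h2
    · refine Or.inr ⟨h1 0 (Fin.succ_pos j), ⟨j, fun j' hj' => h1 j'.succ (by simpa using hj'), h2⟩⟩
  · rintro (h | ⟨h0, j, h1, h2⟩)
    · exact ⟨0, fun j hj => absurd hj (Fin.not_lt_zero j), h⟩
    · exact ⟨j.succ, fun j' hj' => by
        rcases Fin.eq_zero_or_eq_succ j' with rfl | ⟨j'', rfl⟩
        · exact h0
        · exact h1 j'' (by simpa using hj'), h2⟩

theorem finLexLe {r : ℕ} (x y : Fin (r+1) → ℚ) :
    toLex x ≤ toLex y ↔ toLex ((x 0, toLex (x ∘ Fin.succ)) : ℚ × Lex (Fin r → ℚ)) ≤ toLex (y 0, toLex (y ∘ Fin.succ)) := by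
  rw [Prod.Lex.le_iff]
  constructor
  · intro h
    rcases lt_trichotomy (x 0) (y 0) with h0 | h0 | h0
    · exact Or.inl h0
    · exact Or.inr ⟨h0, le_of_not_gt fun hl => absurd ((finLexLt y x).2 (Or.inr ⟨h0.symm, hl⟩)) (not_lt_of_ge h)⟩
    · exact absurd ((finLexLt y x).2 (Or.inl h0)) (not_lt_of_ge h)
  · intro h
    refine le_of_not_gt fun hlt => ?_
    rcases (finLexLt y x).1 hlt with h' | ⟨h0, h'⟩ <;>
      rcases h with ha | ⟨ha, hb⟩
    · exact absurd ha (not_lt_of_gt h')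
    · exact absurd ha (ne_of_gt h')
    · exact absurd ha (not_lt_of_ge h0.le)
    · exact absurd hb (not_le_of_gt (h0 ▸ h'))

namespace Stmt8Aux

open scoped Classical

variable {k : Type} [Field k] {n : ℕ}

lemma coeff_sum_monomial (s : Finset (Fin n →₀ ℕ)) (c : (Fin n →₀ ℕ) → k) (β : Fin n →₀ ℕ) :
    coeff β (∑ α ∈ s, monomial α (c α)) = if β ∈ s then c β else 0 := by
  rw [MvPolynomial.coeff_sum]
  simp only [MvPolynomial.coeff_monomial]
  rw [Finset.sum_ite_eq' s β c]

lemma coeff_initialForm (le : (Fin n →₀ ℕ) → (Fin n →₀ ℕ) → Prop)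
    (f : MvPolynomial (Fin n) k) (β : Fin n →₀ ℕ) :
    coeff β (initialForm le f) =
      if β ∈ f.support ∧ ∀ γ ∈ f.support, le β γ then coeff β f else 0 := by
  unfold initialForm
  rw [coeff_sum_monomial]
  simp only [Finset.mem_filter]

lemma mem_support_initialForm (le : (Fin n →₀ ℕ) → (Fin n →₀ ℕ) → Prop)
    (f : MvPolynomial (Fin n) k) (β : Fin n →₀ ℕ) :
    β ∈ (initialForm le f).support ↔ β ∈ f.support ∧ ∀ γ ∈ f.support, le β γ := by
  rw [MvPolynomial.mem_support_iff, coeff_initialForm]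
  constructor
  · intro hne
    split_ifs at hne with h
    · exact h
    · exact absurd rfl hne
  · intro h
    rw [if_pos h]
    exact MvPolynomial.mem_support_iff.1 h.1

lemma support_initialForm_subset (le : (Fin n →₀ ℕ) → (Fin n →₀ ℕ) → Prop)
    (f : MvPolynomial (Fin n) k) : (initialForm le f).support ⊆ f.support :=
  fun β hβ => ((mem_support_initialForm le f β).1 hβ).1

lemma initialForm_zero (le : (Fin n →₀ ℕ) → (Fin n →₀ ℕ) → Prop) :
    initialForm (k := k) (n := n) le 0 = 0 := by
  apply MvPolynomial.ext; intro β
  rw [coeff_initialForm]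
  simp

lemma initialForm_smul (le : (Fin n →₀ ℕ) → (Fin n →₀ ℕ) → Prop) {c : k} (hc : c ≠ 0)
    (f : MvPolynomial (Fin n) k) :
    initialForm le (c • f) = c • initialForm le f := by
  apply MvPolynomial.ext; intro β
  rw [MvPolynomial.coeff_smul, coeff_initialForm, coeff_initialForm,
    MvPolynomial.support_smul_eq hc, MvPolynomial.coeff_smul]
  split_ifs
  · rfl
  · exact (mul_zero c).symm


def leW {W : Type*} [LinearOrder W] (wt : (Fin n →₀ ℕ) → W) :
    (Fin n →₀ ℕ) → (Fin n →₀ ℕ) → Prop :=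
  fun α β => wt α ≤ wt β

section WSection
variable {W : Type*} [LinearOrder W] (wt : (Fin n →₀ ℕ) → W)

noncomputable def trunc (w : W) (f : MvPolynomial (Fin n) k) : MvPolynomial (Fin n) k :=
  ∑ α ∈ f.support.filter (fun α => wt α = w), monomial α (coeff α f)

lemma coeff_trunc (w : W) (f : MvPolynomial (Fin n) k) (β : Fin n →₀ ℕ) :
    coeff β (trunc wt w f) = if wt β = w then coeff β f else 0 := by
  rw [trunc, coeff_sum_monomial]
  simp only [Finset.mem_filter]
  by_cases h : wt β = w
  · by_cases h2 : β ∈ f.support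
    · simp [h, h2]
    · simp only [h, and_true, if_pos, h2, if_neg, if_false]
      exact (MvPolynomial.notMem_support_iff.1 h2).symm
  · simp [h]

lemma trunc_zero' (w : W) : trunc (k := k) wt w 0 = 0 := by
  apply MvPolynomial.ext; intro β
  rw [coeff_trunc]
  simp

lemma trunc_sum {ι : Type*} (w : W) (s : Finset ι) (f : ι → MvPolynomial (Fin n) k) :
    trunc wt w (∑ i ∈ s, f i) = ∑ i ∈ s, trunc wt w (f i) := by
  apply MvPolynomial.ext; intro β
  simp only [coeff_trunc, MvPolynomial.coeff_sum]
  split_ifs with h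
  · rfl
  · simp

lemma initialForm_eq_trunc {f : MvPolynomial (Fin n) k} {α0 : Fin n →₀ ℕ}
    (h0 : α0 ∈ f.support) (hmin : ∀ β ∈ f.support, wt α0 ≤ wt β) :
    initialForm (leW wt) f = trunc wt (wt α0) f := by
  apply MvPolynomial.ext; intro β
  rw [coeff_initialForm, coeff_trunc]
  by_cases hs : β ∈ f.support
  · by_cases he : wt β = wt α0
    · rw [if_pos ⟨hs, fun γ hγ => he.le.trans (hmin γ hγ)⟩, if_pos he]
    · rw [if_neg, if_neg he]
      rintro ⟨-, hm⟩
      exact he (le_antisymm (hm α0 h0) (hmin β hs))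
  · rw [if_neg (fun h => hs h.1)]
    split_ifs
    · exact (MvPolynomial.notMem_support_iff.1 hs).symm
    · rfl

lemma initialForm_eq_trunc_of_le {f : MvPolynomial (Fin n) k} {w : W}
    (hsub : ∀ α ∈ f.support, w ≤ wt α) (hne : trunc wt w f ≠ 0) :
    initialForm (leW wt) f = trunc wt w f := by
  obtain ⟨β, hβ⟩ := MvPolynomial.ne_zero_iff.1 hne
  rw [coeff_trunc] at hβ
  split_ifs at hβ with hw
  · have hs : β ∈ f.support := MvPolynomial.mem_support_iff.2 hβ
    rw [initialForm_eq_trunc wt hs (fun γ hγ => hw.le.trans (hsub γ hγ)), hw]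
  · exact absurd rfl hβ

lemma initialForm_ne_zero {f : MvPolynomial (Fin n) k} (hf : f ≠ 0) :
    initialForm (leW wt) f ≠ 0 := by
  obtain ⟨α0, h0, hmin⟩ := Finset.exists_min_image f.support wt (MvPolynomial.support_nonempty.2 hf)
  intro h
  have h2 := coeff_initialForm (leW wt) f α0
  rw [h, MvPolynomial.coeff_zero, if_pos ⟨h0, hmin⟩] at h2
  exact MvPolynomial.mem_support_iff.1 h0 h2.symm

lemma wt_eq_of_mem_support_initialForm {f : MvPolynomial (Fin n) k} {α β : Fin n →₀ ℕ}
    (hα : α ∈ (initialForm (leW wt) f).support) (hβ : β ∈ (initialForm (leW wt) f).support) :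
    wt α = wt β := by
  rw [mem_support_initialForm] at hα hβ
  exact le_antisymm (hα.2 β hβ.1) (hβ.2 α hα.1)

lemma wt_le_of_mem_support_initialForm {f : MvPolynomial (Fin n) k} {α β : Fin n →₀ ℕ}
    (hα : α ∈ (initialForm (leW wt) f).support) (hβ : β ∈ f.support) : wt α ≤ wt β :=
  ((mem_support_initialForm _ f α).1 hα).2 β hβ


end WSection

lemma mem_support_monomial_mul {γ : Fin n →₀ ℕ} {c : k} (hc : c ≠ 0)
    (f : MvPolynomial (Fin n) k) (β : Fin n →₀ ℕ) :
    β ∈ (monomial γ c * f).support ↔ ∃ α ∈ f.support, β = γ + α := by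
  rw [MvPolynomial.mem_support_iff, MvPolynomial.coeff_monomial_mul']
  constructor
  · intro h
    split_ifs at h with hle
    · obtain ⟨δ, rfl⟩ := le_iff_exists_add.1 hle
      refine ⟨δ, ?_, rfl⟩
      rw [MvPolynomial.mem_support_iff]
      intro h0
      rw [add_tsub_cancel_left, h0, mul_zero] at h
      exact h rfl
    · exact absurd rfl h
  · rintro ⟨α, hα, rfl⟩
    rw [if_pos (self_le_add_right γ α), add_tsub_cancel_left]
    exact mul_ne_zero hc (MvPolynomial.mem_support_iff.1 hα)

section WSection2
variable {W : Type*} [LinearOrder W] (wt : (Fin n →₀ ℕ) → W)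

lemma initialForm_monomial_mul
    (htr : ∀ (γ α β : Fin n →₀ ℕ), wt α ≤ wt β ↔ wt (γ + α) ≤ wt (γ + β))
    (γ : Fin n →₀ ℕ) {c : k} (hc : c ≠ 0) (f : MvPolynomial (Fin n) k) :
    initialForm (leW wt) (monomial γ c * f) = monomial γ c * initialForm (leW wt) f := by
  apply MvPolynomial.ext; intro β
  rw [MvPolynomial.coeff_monomial_mul']
  by_cases hle : γ ≤ β
  · obtain ⟨α, rfl⟩ := le_iff_exists_add.1 hle
    rw [if_pos hle, add_tsub_cancel_left, coeff_initialForm, coeff_initialForm,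
      MvPolynomial.coeff_monomial_mul]
    have hmem : (γ + α ∈ (monomial γ c * f).support) ↔ α ∈ f.support := by
      rw [mem_support_monomial_mul hc]
      constructor
      · rintro ⟨α', hα', he⟩
        rwa [(add_right_inj γ).1 he]
      · exact fun h => ⟨α, h, rfl⟩
    have hmin : (∀ δ ∈ (monomial γ c * f).support, leW wt (γ + α) δ) ↔
        (∀ α' ∈ f.support, leW wt α α') := by
      constructor
      · intro h α' hα'
        exact (htr γ α α').2 (h (γ + α') ((mem_support_monomial_mul hc f _).2 ⟨α', hα', rfl⟩))
      · intro h δ hδ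
        obtain ⟨α', hα', rfl⟩ := (mem_support_monomial_mul hc f δ).1 hδ
        exact (htr γ α α').1 (h α' hα')
    rw [if_congr (and_congr hmem hmin) rfl rfl]
    split_ifs
    · rfl
    · exact (mul_zero c).symm
  · rw [if_neg hle, coeff_initialForm, if_neg, eq_comm]
    rintro ⟨hs, -⟩
    obtain ⟨α', -, rfl⟩ := (mem_support_monomial_mul hc f β).1 hs
    exact hle (self_le_add_right γ α')

variable {W2 : Type*} [LinearOrder W2]

lemma initialForm_comp (wt1 : (Fin n →₀ ℕ) → W) (wt2 : (Fin n →₀ ℕ) → W2)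
    (f : MvPolynomial (Fin n) k) :
    initialForm (leW fun α => toLex ((wt1 α, wt2 α) : W × W2)) f
      = initialForm (leW wt2) (initialForm (leW wt1) f) := by
  apply MvPolynomial.ext; intro β
  rw [coeff_initialForm, coeff_initialForm]
  set g := initialForm (leW wt1) f with hg
  by_cases hP : β ∈ g.support ∧ ∀ γ ∈ g.support, leW wt2 β γ
  · rw [if_pos hP]
    have hβf := (mem_support_initialForm (leW wt1) f β).1 hP.1
    have hcoeff : coeff β g = coeff β f := by
      rw [hg, coeff_initialForm, if_pos hβf]
    rw [hcoeff, if_pos]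
    refine ⟨hβf.1, fun γ hγ => ?_⟩
    show toLex (wt1 β, wt2 β) ≤ toLex (wt1 γ, wt2 γ)
    rcases lt_or_eq_of_le (hβf.2 γ hγ : wt1 β ≤ wt1 γ) with h1 | h1
    · exact Prod.Lex.le_iff.2 (Or.inl h1)
    · refine Prod.Lex.le_iff.2 (Or.inr ⟨h1, ?_⟩)
      have hγg : γ ∈ g.support := (mem_support_initialForm (leW wt1) f γ).2
        ⟨hγ, fun δ hδ => h1.symm.le.trans (hβf.2 δ hδ)⟩
      exact hP.2 γ hγg
  · rw [if_neg hP, if_neg]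
    rintro ⟨hβf, hmin⟩
    apply hP
    have hmin1 : ∀ γ ∈ f.support, leW wt1 β γ := by
      intro γ hγ
      rcases Prod.Lex.le_iff.1 (hmin γ hγ) with h | h
      · exact le_of_lt h
      · exact le_of_eq h.1
    have hβg : β ∈ g.support := (mem_support_initialForm (leW wt1) f β).2 ⟨hβf, hmin1⟩
    refine ⟨hβg, fun γ hγ => ?_⟩
    have hγf := (mem_support_initialForm (leW wt1) f γ).1 hγ
    have h1 : wt1 β = wt1 γ := le_antisymm (hmin1 γ hγf.1) (hγf.2 β hβf)
    rcases Prod.Lex.le_iff.1 (hmin γ hγf.1) with h | h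
    · exact absurd h1 (ne_of_lt h)
    · exact h.2

end WSection2

section Ideals
variable {W : Type*} [LinearOrder W] (wt1 : (Fin n →₀ ℕ) → W)

lemma mem_spanK_of_mem_initialIdeal
    (htr : ∀ (γ α β : Fin n →₀ ℕ), wt1 α ≤ wt1 β ↔ wt1 (γ + α) ≤ wt1 (γ + β))
    (I : Ideal (MvPolynomial (Fin n) k)) {g : MvPolynomial (Fin n) k}
    (hg : g ∈ initialIdeal (leW wt1) I) :
    g ∈ Submodule.span k {g | ∃ f ∈ I, f ≠ 0 ∧ g = initialForm (leW wt1) f} := by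
  set S := {g | ∃ f ∈ I, f ≠ 0 ∧ g = initialForm (leW wt1) f} with hS
  have hmul : ∀ (p : MvPolynomial (Fin n) k) {x : MvPolynomial (Fin n) k},
      x ∈ Submodule.span k S → p * x ∈ Submodule.span k S := by
    intro p x hx
    refine Submodule.span_induction (fun s hs => ?_) (by simp)
      (fun a b _ _ ha hb => by rw [mul_add]; exact Submodule.add_mem _ ha hb)
      (fun a y _ h => by rw [mul_smul_comm]; exact Submodule.smul_mem _ a h) hx
    obtain ⟨f, hfI, hf0, rfl⟩ := hs
    rw [MvPolynomial.as_sum p, Finset.sum_mul]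
    refine Submodule.sum_mem _ fun γ hγ => ?_
    have hcγ : coeff γ p ≠ 0 := MvPolynomial.mem_support_iff.1 hγ
    rw [← initialForm_monomial_mul wt1 htr γ hcγ f]
    exact Submodule.subset_span ⟨monomial γ (coeff γ p) * f, I.mul_mem_left _ hfI,
      mul_ne_zero (fun h => hcγ (MvPolynomial.monomial_eq_zero.1 h)) hf0, rfl⟩
  rw [initialIdeal] at hg
  exact Submodule.span_induction (fun s hs => Submodule.subset_span hs) (Submodule.zero_mem _)
    (fun a b _ _ ha hb => Submodule.add_mem _ ha hb)
    (fun p a _ h => by rw [smul_eq_mul]; exact hmul p h) hg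

variable {W2 : Type*} [LinearOrder W2]

lemma initialIdeal_comp (wt2 : (Fin n →₀ ℕ) → W2)
    (htr : ∀ (γ α β : Fin n →₀ ℕ), wt1 α ≤ wt1 β ↔ wt1 (γ + α) ≤ wt1 (γ + β))
    (I : Ideal (MvPolynomial (Fin n) k)) :
    initialIdeal (leW fun α => toLex ((wt1 α, wt2 α) : W × W2)) I
      = initialIdeal (leW wt2) (initialIdeal (leW wt1) I) := by
  apply le_antisymm
  · rw [initialIdeal, Ideal.span_le]
    rintro G ⟨f, hfI, hf0, rfl⟩
    rw [initialForm_comp]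
    exact Ideal.subset_span ⟨initialForm (leW wt1) f,
      Ideal.subset_span ⟨f, hfI, hf0, rfl⟩, initialForm_ne_zero wt1 hf0, rfl⟩
  · conv_lhs => rw [initialIdeal]
    rw [Ideal.span_le]
    rintro G ⟨g, hgJ, hg0, rfl⟩
    -- main computation: show in_{wt2} g ∈ initialIdeal wtP I
    obtain ⟨c, hcS, hcsum⟩ := Submodule.mem_span_set.1 (mem_spanK_of_mem_initialIdeal wt1 htr I hgJ)
    have hchoice : ∀ s : MvPolynomial (Fin n) k, ∃ F : MvPolynomial (Fin n) k,
        s ∈ c.support → F ∈ I ∧ F ≠ 0 ∧ c s • s = initialForm (leW wt1) F := by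
      intro s
      by_cases hs : s ∈ c.support
      · have hcs : c s ≠ 0 := Finsupp.mem_support_iff.1 hs
        obtain ⟨f, hfI, hf0, hsf⟩ := hcS hs
        refine ⟨c s • f, fun _ => ⟨?_, smul_ne_zero hcs hf0, ?_⟩⟩
        · rw [MvPolynomial.smul_eq_C_mul]
          exact I.mul_mem_left _ hfI
        · rw [initialForm_smul _ hcs, hsf]
      · exact ⟨1, fun h => absurd h hs⟩
    choose F hF using hchoice
    have hgsum : g = ∑ s ∈ c.support, initialForm (leW wt1) (F s) := by
      rw [← hcsum, Finsupp.sum]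
      exact Finset.sum_congr rfl fun s hs => (hF s hs).2.2
    -- the weight of each homogeneous piece
    have hkeych : ∀ s : MvPolynomial (Fin n) k, ∃ w : W,
        ∀ α ∈ (initialForm (leW wt1) (F s)).support, wt1 α = w := by
      intro s
      by_cases hne : (initialForm (leW wt1) (F s)).support.Nonempty
      · exact ⟨wt1 hne.choose, fun α hα =>
          wt_eq_of_mem_support_initialForm wt1 hα hne.choose_spec⟩
      · exact ⟨wt1 0, fun α hα => absurd ⟨α, hα⟩ hne⟩
    choose key hkey using hkeych
    set T := c.support with hT
    set Q := T.image key with hQ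
    set G : W → MvPolynomial (Fin n) k :=
      fun w => ∑ s ∈ T.filter (fun s => key s = w), initialForm (leW wt1) (F s) with hG
    set H : W → MvPolynomial (Fin n) k :=
      fun w => ∑ s ∈ T.filter (fun s => key s = w), F s with hH
    have hgQ : g = ∑ w ∈ Q, G w := by
      rw [hgsum]
      exact (Finset.sum_fiberwise_of_maps_to (fun s hs => Finset.mem_image_of_mem key hs) _).symm
    -- support of G w lies in weight-w part
    have hsuppG : ∀ w, ∀ α ∈ (G w).support, wt1 α = w := by
      intro w α hα
      obtain ⟨s, hs, hαs⟩ := Finset.mem_biUnion.1 (MvPolynomial.support_sum hα)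
      rw [Finset.mem_filter] at hs
      rw [hkey s α hαs, hs.2]
    -- support of G w is contained in support of g, for w ∈ Q
    have hsuppGg : ∀ w ∈ Q, (G w).support ⊆ g.support := by
      intro w hw α hα
      rw [MvPolynomial.mem_support_iff, hgQ, MvPolynomial.coeff_sum]
      rw [Finset.sum_eq_single_of_mem w hw (fun w' _ hw' => ?_)]
      · exact MvPolynomial.mem_support_iff.1 hα
      · by_contra hne
        exact hw' ((hsuppG w' α (MvPolynomial.mem_support_iff.2 hne)).symm.trans (hsuppG w α hα))
    -- each nonzero G w is the initial form of H w
    have hGH : ∀ w ∈ Q, G w ≠ 0 → H w ∈ I ∧ H w ≠ 0 ∧ G w = initialForm (leW wt1) (H w) := by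
      intro w hw hGw
      have hHI : H w ∈ I := Submodule.sum_mem _ fun s hs => (hF s (Finset.mem_filter.1 hs).1).1
      have htruncF : ∀ s ∈ T.filter (fun s => key s = w),
          initialForm (leW wt1) (F s) = trunc wt1 w (F s) := by
        intro s hs
        rw [Finset.mem_filter] at hs
        have hF0 := (hF s hs.1).2.1
        obtain ⟨β, hβ⟩ := MvPolynomial.support_nonempty.2 (initialForm_ne_zero wt1 hF0)
        have : initialForm (leW wt1) (F s) = trunc wt1 (wt1 β) (F s) :=
          initialForm_eq_trunc wt1 (support_initialForm_subset _ _ hβ)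
            (fun γ hγ => wt_le_of_mem_support_initialForm wt1 hβ hγ)
        rwa [hkey s β hβ, hs.2] at this
      have hGtrunc : G w = trunc wt1 w (H w) := by
        rw [hG]
        simp only []
        rw [Finset.sum_congr rfl htruncF, hH, trunc_sum]
      have hH0 : H w ≠ 0 := by
        intro h
        rw [hGtrunc, h, trunc_zero'] at hGw
        exact hGw rfl
      refine ⟨hHI, hH0, ?_⟩
      rw [hGtrunc]
      refine (initialForm_eq_trunc_of_le wt1 (fun α hα => ?_) (hGtrunc ▸ hGw)).symm
      -- w ≤ wt1 α for α ∈ (H w).support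
      obtain ⟨s, hs, hαs⟩ := Finset.mem_biUnion.1 (MvPolynomial.support_sum hα)
      rw [Finset.mem_filter] at hs
      have hF0 := (hF s hs.1).2.1
      obtain ⟨β, hβ⟩ := MvPolynomial.support_nonempty.2 (initialForm_ne_zero wt1 hF0)
      have := wt_le_of_mem_support_initialForm wt1 hβ hαs
      rwa [hkey s β hβ, hs.2] at this
    -- choose the minimal wt2 weight on the support of g
    obtain ⟨α0, hα0, hα0min⟩ :=
      Finset.exists_min_image g.support wt2 (MvPolynomial.support_nonempty.2 hg0)
    have hin2g : initialForm (leW wt2) g = trunc wt2 (wt2 α0) g :=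
      initialForm_eq_trunc wt2 hα0 hα0min
    have hsplit : trunc wt2 (wt2 α0) g = ∑ w ∈ Q, trunc wt2 (wt2 α0) (G w) := by
      rw [hgQ, trunc_sum]
    rw [hin2g, hsplit]
    refine Submodule.sum_mem _ fun w hw => ?_
    by_cases h0 : trunc wt2 (wt2 α0) (G w) = 0
    · rw [h0]; exact Submodule.zero_mem _
    · have hGw : G w ≠ 0 := by
        intro h; rw [h, trunc_zero'] at h0; exact h0 rfl
      obtain ⟨hHI, hH0, hGH'⟩ := hGH w hw hGw
      have : initialForm (leW wt2) (G w) = trunc wt2 (wt2 α0) (G w) :=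
        initialForm_eq_trunc_of_le wt2 (fun α hα => hα0min α (hsuppGg w hw hα)) h0
      rw [← this, hGH', ← initialForm_comp]
      exact Ideal.subset_span ⟨H w, hHI, hH0, rfl⟩

end Ideals
end Stmt8Aux

open Stmt8Aux

lemma uwt_add {n : ℕ} (u : Fin n → ℚ) (γ α : Fin n →₀ ℕ) :
    uwt u (γ + α) = uwt u γ + uwt u α := by
  unfold uwt
  rw [← Finset.sum_add_distrib]
  refine Finset.sum_congr rfl fun j _ => ?_
  rw [Finsupp.add_apply, Nat.cast_add, mul_add]

lemma uwt_htr {n : ℕ} (u : Fin n → ℚ) :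
    ∀ (γ α β : Fin n →₀ ℕ), uwt u α ≤ uwt u β ↔ uwt u (γ + α) ≤ uwt u (γ + β) := by
  intro γ α β
  rw [uwt_add, uwt_add]
  exact (add_le_add_iff_left _).symm

lemma mLe_succ {n r : ℕ} (M : Matrix (Fin (r+1)) (Fin n) ℚ) :
    mLe M = leW (fun α => toLex ((uwt (M 0) α,
      toLex (mwt (M.submatrix Fin.succ id) α)) : ℚ × Lex (Fin r → ℚ))) := by
  funext α β
  apply propext
  show toLex (mwt M α) ≤ toLex (mwt M β) ↔ _
  rw [finLexLe]
  exact Iff.rfl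

lemma initialForm_rank_zero {k : Type} [Field k] {n : ℕ} (M : Matrix (Fin 0) (Fin n) ℚ)
    (f : MvPolynomial (Fin n) k) : initialForm (mLe M) f = f := by
  apply MvPolynomial.ext; intro β
  rw [coeff_initialForm]
  by_cases h : β ∈ f.support
  · exact if_pos ⟨h, fun γ _ => le_of_eq (congrArg toLex (Subsingleton.elim _ _))⟩
  · rw [if_neg (fun hh => h hh.1)]
    exact (MvPolynomial.notMem_support_iff.1 h).symm

lemma initialIdeal_rank_zero {k : Type} [Field k] {n : ℕ} (M : Matrix (Fin 0) (Fin n) ℚ)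
    (I : Ideal (MvPolynomial (Fin n) k)) : initialIdeal (mLe M) I = I := by
  apply le_antisymm
  · rw [initialIdeal, Ideal.span_le]
    rintro g ⟨f, hfI, hf0, rfl⟩
    rw [initialForm_rank_zero]
    exact hfI
  · intro f hf
    by_cases h0 : f = 0
    · rw [h0]; exact Submodule.zero_mem _
    · exact Ideal.subset_span ⟨f, hf, h0, (initialForm_rank_zero M f).symm⟩

/-- **Higher rank initial ideals are iterated rank-one initial ideals**
(Lemma `lem-in_w-in_u_i`): if `M` has rows `u_1, …, u_r` then
`in_M(I) = in_{u_r}(… in_{u_2}(in_{u_1}(I)) …)`. -/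
theorem stmt_8 {k : Type} [Field k] {n r : ℕ}
    (I : Ideal (MvPolynomial (Fin n) k)) (M : Matrix (Fin r) (Fin n) ℚ) :
    initialIdeal (mLe M) I =
      iteratedInitial (List.ofFn fun i : Fin r => (M i : Fin n → ℚ)) I := by
  induction r generalizing I with
  | zero =>
    rw [initialIdeal_rank_zero]
    simp only [List.ofFn_zero]
    rfl
  | succ r ih =>
    have h1 : initialIdeal (mLe M) I
        = initialIdeal (mLe (M.submatrix Fin.succ id)) (initialIdeal (uLe (M 0)) I) := by
      rw [mLe_succ M]
      exact initialIdeal_comp (uwt (M 0)) (fun α => toLex (mwt (M.submatrix Fin.succ id) α))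
        (uwt_htr (M 0)) I
    rw [h1, List.ofFn_succ]
    show initialIdeal (mLe (M.submatrix Fin.succ id)) (initialIdeal (uLe (M 0)) I)
      = iteratedInitial (List.ofFn fun i : Fin r => (M i.succ : Fin n → ℚ))
          (initialIdeal (uLe (M 0)) I)
    have h2 : (fun i : Fin r => (M i.succ : Fin n → ℚ))
        = fun i : Fin r => (M.submatrix Fin.succ id i : Fin n → ℚ) := rfl
    rw [h2]
    exact ih (initialIdeal (uLe (M 0)) I) (M.submatrix Fin.succ id)
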